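/- As an identity of formal power series in x and y: Σ_{n≥1} Σ_{k=0}^{n-1} CT(n,k) x^n y^k = Σ_{n≥1} x^n (1+xy)^{n(n-1)/2} / Π_{k=0}^{n-1} (1 - (1+xy)^k x y), where CT(n,k) is the number of partitions of [n] with k arcs avoiding right crossings. -/

import Mathlib

open Finset

/-- A partial matching of `[m]`: a set of arcs `(i,j)` with `1 ≤ i < j ≤ m`
such that every vertex belongs to at most one arc. -/
def IsMatching (m : ℕ) (M : Finset (ℕ × ℕ)) : Prop :=
  (∀ p ∈ M, 1 ≤ p.1 ∧ p.1 < p.2 ∧ p.2 ≤ m) ∧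
  ∀ p ∈ M, ∀ q ∈ M, p ≠ q → p.1 ≠ q.1 ∧ p.1 ≠ q.2 ∧ p.2 ≠ q.1 ∧ p.2 ≠ q.2

/-- The linear (arc) diagram of a partition of `[n]`: every vertex is the left
endpoint of at most one arc and the right endpoint of at most one arc. -/
def IsPartitionDiagram (n : ℕ) (P : Finset (ℕ × ℕ)) : Prop :=
  (∀ p ∈ P, 1 ≤ p.1 ∧ p.1 < p.2 ∧ p.2 ≤ n) ∧
  ∀ p ∈ P, ∀ q ∈ P, p ≠ q → p.1 ≠ q.1 ∧ p.2 ≠ q.2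

/-- A 2-right crossing: arcs `(i1,j1)`, `(i2,j2)` with `i1<i2<j1<j2` and `j2-j1 ≤ 2`. -/
def Has2RightCrossing (M : Finset (ℕ × ℕ)) : Prop :=
  ∃ p ∈ M, ∃ q ∈ M, p.1 < q.1 ∧ q.1 < p.2 ∧ p.2 < q.2 ∧ q.2 ≤ p.2 + 2

/-- A right crossing: arcs `(i1,j1)`, `(i2,j2)` with `i1<i2<j1<j2` and `j2 = j1+1`. -/
def HasRightCrossing (M : Finset (ℕ × ℕ)) : Prop :=
  ∃ p ∈ M, ∃ q ∈ M, p.1 < q.1 ∧ q.1 < p.2 ∧ p.2 < q.2 ∧ q.2 = p.2 + 1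

/-- A right nesting: arcs `(i1,j1)`, `(i2,j2)` with `i1<i2<j2<j1` and `j1 = j2+1`. -/
def HasRightNesting (M : Finset (ℕ × ℕ)) : Prop :=
  ∃ p ∈ M, ∃ q ∈ M, p.1 < q.1 ∧ q.1 < q.2 ∧ q.2 < p.2 ∧ p.2 = q.2 + 1

/-- `P(m,k)`: partial matchings of `[m]` with `k` arcs avoiding 2-right crossings
and right nestings. -/
def PMSet (m k : ℕ) : Set (Finset (ℕ × ℕ)) :=
  {M | IsMatching m M ∧ M.card = k ∧ ¬ Has2RightCrossing M ∧ ¬ HasRightNesting M}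

/-- `CT(n,k)`: partitions of `[n]` with `k` arcs avoiding right crossings. -/
def CTSet (n k : ℕ) : Set (Finset (ℕ × ℕ)) :=
  {P | IsPartitionDiagram n P ∧ P.card = k ∧ ¬ HasRightCrossing P}

/-- `lmax x i = max(x_0, …, x_{i-1})` (with value `0` when `i = 0`). -/
def lmax (x : ℕ → ℕ) (i : ℕ) : ℕ := (Finset.range i).sup x

/-- `x_i` is a left-to-right maximum (with `x_0` always counted as one). -/
def IsLTRMax (x : ℕ → ℕ) (i : ℕ) : Prop := i = 0 ∨ lmax x i < x i

/-- `S(n,k)`: sequences `x_0 … x_{n-1}` (extended by `0`) with `x_0 = 0`,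
`0 ≤ x_i ≤ max(x_0…x_{i-1})+1`, `x_i < x_{i-1}` whenever `x_i < max(x_0…x_{i-1})`,
and exactly `n-k` left-to-right maxima. -/
def SeqSet (n k : ℕ) : Set (ℕ → ℕ) :=
  {x | (∀ i, n ≤ i → x i = 0) ∧ x 0 = 0 ∧
       (∀ i, 1 ≤ i → i < n → x i ≤ lmax x i + 1) ∧
       (∀ i, 1 ≤ i → i < n → x i < lmax x i → x i < x (i - 1)) ∧
       ((Finset.range n).filter (fun i => i = 0 ∨ lmax x i < x i)).card = n - k}
open MvPowerSeries in
/-- The generating-function term `x^n (1+xy)^{C(n,2)} / ∏_{k=0}^{n-1}(1-(1+xy)^k xy)`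
in `ℚ[[x,y]]`, with `x = X 0`, `y = X 1`. -/
noncomputable def gfTerm (n : ℕ) : MvPowerSeries (Fin 2) ℚ :=
  (X 0 : MvPowerSeries (Fin 2) ℚ) ^ n * (1 + X 0 * X 1) ^ (n.choose 2) *
    ∏ k ∈ Finset.range n, (1 - (1 + X 0 * X 1) ^ k * X 0 * X 1)⁻¹


set_option linter.unnecessarySeqFocus false
noncomputable section

/-- Allowed next values from state `(j, w)`. -/
def allowedF (j w : ℕ) : Finset ℕ := (Finset.range (j+1)).filter (fun w' => w' < w ∨ w' = j)

/-- Reversed allowed relation: previous states from which `w` is allowed. -/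
def revAllowedF (j w : ℕ) : Finset ℕ := (Finset.range (j+1)).filter (fun w' => w < w' ∨ w = j)

/-- `Nval j m w`: number of valid continuation runs of length `m` from state `(j, w)`. -/
def Nval (j : ℕ) : ℕ → ℕ → ℕ
  | 0, _ => 1
  | m+1, w => ∑ w' ∈ allowedF j w, Nval j m w'

/-- `RunEnd j m w`: number of runs of length `m` (from the fresh-opener state) ending at `w`
(for `m = 0`, state is the opener state, encoded `w = j`). -/
def RunEnd (j : ℕ) : ℕ → ℕ → ℕ
  | 0, w => if w = j then 1 else 0
  | m+1, w => ∑ w' ∈ revAllowedF j w, RunEnd j m w'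

/-- Number of valid words of length `a` with `b` closers, ending in state `w`. -/
def Tnum : ℕ → ℕ → ℕ → ℕ
  | 0, _, _ => 0
  | 1, b, w => if b = 0 ∧ w = 0 then 1 else 0
  | (a+2), b, w =>
      (if w = a + 1 - b then ∑ w' ∈ Finset.range (a + 1 - b), Tnum (a+1) b w' else 0) +
      (if b = 0 then 0 else ∑ w' ∈ revAllowedF (a + 1 - b) w, Tnum (a+1) (b-1) w')

def Tot (a b : ℕ) : ℕ := ∑ w ∈ Finset.range (a - b), Tnum a b w

def Totx (a b : ℕ) : ℕ := if a = 0 then (if b = 0 then 1 else 0) else Tot a b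

def sval : ℕ → ℕ → ℕ
  | 0, b => if b = 0 then 1 else 0
  | (n+1), b => ∑ m ∈ Finset.range (b+1), sval n m * Nval n (b - m) n

lemma mem_allowedF {j w x : ℕ} : x ∈ allowedF j w ↔ x ≤ j ∧ (x < w ∨ x = j) := by
  simp [allowedF, Nat.lt_succ_iff]

lemma mem_revAllowedF {j w x : ℕ} : x ∈ revAllowedF j w ↔ x ≤ j ∧ (w < x ∨ w = j) := by
  simp [revAllowedF, Nat.lt_succ_iff]

lemma allowedF_zero (j : ℕ) : allowedF j 0 = {j} := by
  ext x; simp [mem_allowedF]; omega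

lemma allowedF_self (j : ℕ) : allowedF j j = Finset.range (j+1) := by
  ext x; simp [mem_allowedF, Nat.lt_succ_iff]; omega

lemma allowedF_succ {j w : ℕ} (h : w < j) : allowedF j (w+1) = insert w (allowedF j w) := by
  ext x; simp [mem_allowedF]; omega

lemma Nval_succ_self (j m : ℕ) : Nval j (m+1) j = ∑ w' ∈ Finset.range (j+1), Nval j m w' := by
  rw [show Nval j (m+1) j = ∑ w' ∈ allowedF j j, Nval j m w' from rfl, allowedF_self]

/-- Concatenation identity. -/
lemma runEnd_mul_Nval (j : ℕ) : ∀ m m', ∑ w ∈ Finset.range (j+1), RunEnd j m w * Nval j m' w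
    = Nval j (m + m') j := by
  intro m
  induction m with
  | zero =>
    intro m'
    simp only [RunEnd, zero_add]
    rw [Finset.sum_congr rfl (fun w _ => by rw [ite_mul, one_mul, zero_mul]), Finset.sum_ite_eq']
    simp [Nat.lt_succ_iff]
  | succ m ih =>
    intro m'
    have swap : ∑ w ∈ Finset.range (j+1), ∑ w' ∈ revAllowedF j w, RunEnd j m w' * Nval j m' w
        = ∑ w' ∈ Finset.range (j+1), ∑ w ∈ allowedF j w', RunEnd j m w' * Nval j m' w := by
      refine Finset.sum_comm' ?_
      intro w w'
      simp only [Finset.mem_range, Nat.lt_succ_iff, mem_revAllowedF, mem_allowedF]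
      omega
    calc ∑ w ∈ Finset.range (j+1), RunEnd j (m+1) w * Nval j m' w
        = ∑ w ∈ Finset.range (j+1), ∑ w' ∈ revAllowedF j w, RunEnd j m w' * Nval j m' w := by
          refine Finset.sum_congr rfl (fun w _ => ?_)
          rw [show RunEnd j (m+1) w = ∑ w' ∈ revAllowedF j w, RunEnd j m w' from rfl,
            Finset.sum_mul]
      _ = ∑ w' ∈ Finset.range (j+1), ∑ w ∈ allowedF j w', RunEnd j m w' * Nval j m' w := swap
      _ = ∑ w' ∈ Finset.range (j+1), RunEnd j m w' * Nval j (m'+1) w' := by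
          refine Finset.sum_congr rfl (fun w' _ => ?_)
          rw [show Nval j (m'+1) w' = ∑ w ∈ allowedF j w', Nval j m' w from rfl, Finset.mul_sum]
      _ = Nval j (m + (m'+1)) j := ih (m'+1)
      _ = Nval j (m + 1 + m') j := by ring_nf

lemma Tnum_eq_zero : ∀ a b w, a ≤ b → Tnum a b w = 0 := by
  intro a
  induction a using Nat.strong_induction_on with
  | _ a ih =>
    match a with
    | 0 => intro b w _; rfl
    | 1 =>
      intro b w h
      simp only [Tnum, ite_eq_right_iff, and_imp]
      intro hb; omega
    | (a+2) =>
      intro b w h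
      have h1 : a + 1 - b = 0 := by omega
      simp only [Tnum, h1, Finset.range_zero, Finset.sum_empty]
      have h2 : ∀ w', Tnum (a+1) (b-1) w' = 0 := fun w' => ih (a+1) (by omega) _ _ (by omega)
      simp [h2]

lemma Tot_eq_zero {a b : ℕ} (h : a ≤ b) : Tot a b = 0 := by
  simp [Tot, show a - b = 0 by omega]

/-- Closed form for `Tnum`. -/
lemma Tnum_closed : ∀ n b w, 1 ≤ n → Tnum (n + b) b w =
    ∑ m ∈ Finset.range (b+1), Totx (n - 1 + (b - m)) (b - m) * RunEnd (n-1) m w := by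
  intro n b
  induction b generalizing n with
  | zero =>
    intro w hn
    simp only [zero_add, Finset.range_one, Finset.sum_singleton, Nat.sub_zero]
    match n, hn with
    | 1, _ =>
      show Tnum 1 0 w = Totx 0 0 * RunEnd 0 0 w
      simp only [Tnum, Totx, RunEnd, if_true, Nat.sub_self]
      by_cases hw : w = 0 <;> simp [hw]
    | (a+2), _ =>
      show Tnum (a+2) 0 w = Totx (a+1) 0 * RunEnd (a+1) 0 w
      simp only [Tnum, Totx, RunEnd, Nat.sub_zero, Nat.add_sub_cancel]
      by_cases hw : w = a + 1 <;> simp [hw, Tot]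
  | succ b ih =>
    intro w hn
    have hj : n + (b+1) - 1 - (b+1) + 1 = n := by omega
    have key : Tnum (n + (b+1)) (b+1) w =
        (if w = n - 1 then Tot (n + b) (b+1) else 0) +
        ∑ w' ∈ revAllowedF (n-1) w, Tnum (n + b) b w' := by
      have hrep : n + (b + 1) = (n + b - 1) + 2 := by omega
      rw [hrep]
      show (if w = n + b - 1 + 1 - (b+1) then ∑ w' ∈ Finset.range (n + b - 1 + 1 - (b+1)),
            Tnum (n + b - 1 + 1) (b+1) w' else 0) +
          (if b + 1 = 0 then 0 else ∑ w' ∈ revAllowedF (n + b - 1 + 1 - (b+1)) w,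
            Tnum (n + b - 1 + 1) (b+1-1) w') = _
      have e1 : n + b - 1 + 1 - (b+1) = n - 1 := by omega
      have e2 : n + b - 1 + 1 = n + b := by omega
      rw [e1, e2]
      simp only [if_neg (Nat.succ_ne_zero b), Nat.add_sub_cancel]
      congr 1
      · by_cases hw : w = n - 1 <;> simp [hw, Tot, show n + b - (b+1) = n - 1 by omega]
    rw [key]
    have peel : ∑ m ∈ Finset.range (b+2), Totx (n - 1 + (b+1 - m)) (b+1 - m) * RunEnd (n-1) m w
        = Totx (n + b) (b+1) * RunEnd (n-1) 0 w
          + ∑ m ∈ Finset.range (b+1), Totx (n - 1 + (b - m)) (b - m) * RunEnd (n-1) (m+1) w := by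
      rw [Finset.sum_range_succ' (fun m => Totx (n - 1 + (b+1 - m)) (b+1 - m) * RunEnd (n-1) m w) (b+1)]
      rw [add_comm]
      congr 1
      · congr 1
        · congr 1 <;> omega
      · refine Finset.sum_congr rfl (fun m hm => ?_)
        simp only [Finset.mem_range] at hm
        congr 2 <;> omega
    rw [peel]
    congr 1
    · show _ = Totx (n + b) (b+1) * RunEnd (n-1) 0 w
      rw [show RunEnd (n-1) 0 w = if w = n-1 then 1 else 0 from rfl]
      have : Totx (n + b) (b+1) = Tot (n + b) (b+1) := by
        rw [Totx, if_neg (show n + b ≠ 0 by omega)]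
      rw [this]
      by_cases hw : w = n - 1 <;> simp [hw]
    · -- closer part
      have swap : ∑ m ∈ Finset.range (b+1), Totx (n - 1 + (b - m)) (b - m) * RunEnd (n-1) (m+1) w
          = ∑ w' ∈ revAllowedF (n-1) w, ∑ m ∈ Finset.range (b+1),
              Totx (n - 1 + (b - m)) (b - m) * RunEnd (n-1) m w' := by
        have : ∀ m, RunEnd (n-1) (m+1) w = ∑ w' ∈ revAllowedF (n-1) w, RunEnd (n-1) m w' :=
          fun m => rfl
        calc ∑ m ∈ Finset.range (b+1), Totx (n - 1 + (b - m)) (b - m) * RunEnd (n-1) (m+1) w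
            = ∑ m ∈ Finset.range (b+1), ∑ w' ∈ revAllowedF (n-1) w,
                Totx (n - 1 + (b - m)) (b - m) * RunEnd (n-1) m w' := by
              refine Finset.sum_congr rfl (fun m _ => ?_)
              rw [this m, Finset.mul_sum]
          _ = _ := Finset.sum_comm
      rw [swap]
      exact (Finset.sum_congr rfl (fun w' _ => (ih n w' hn).symm)).symm

/-- Main counting identity. -/
lemma Tot_eq_sval : ∀ n b, 1 ≤ n → Tot (n + b) b = sval n b := by
  intro n
  induction n with
  | zero => intro b h; omega
  | succ n ih =>
    intro b _
    rcases Nat.eq_zero_or_pos n with hn | hn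
    · subst hn
      -- n = 1 case
      have h1 : Tot (1 + b) b = Tnum (1 + b) b 0 := by
        simp [Tot, show 1 + b - b = 1 by omega]
      rw [h1, Tnum_closed 1 b 0 le_rfl]
      have h2 : ∀ m ∈ Finset.range (b+1),
          Totx (1 - 1 + (b - m)) (b - m) * RunEnd 0 m 0
          = if m = b then RunEnd 0 m 0 else 0 := by
        intro m hm
        simp only [Finset.mem_range] at hm
        by_cases hmb : m = b
        · subst hmb; simp [Totx]
        · have hz : Tot (1 - 1 + (b - m)) (b - m) = 0 := Tot_eq_zero (by omega)
          simp only [Totx, hmb, if_false]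
          split
          · omega
          · rw [show (1:ℕ) - 1 + (b - m) = b - m from by omega] at hz
            simp [hz]
      rw [Finset.sum_congr rfl h2, Finset.sum_ite_eq' (Finset.range (b+1)) b]
      simp only [Finset.mem_range, Nat.lt_succ_self, if_true]
      -- now: RunEnd 0 b 0 = sval 1 b
      have hci := runEnd_mul_Nval 0 b 0
      simp only [Finset.sum_range_succ, Finset.sum_range_zero, zero_add, Nat.add_zero] at hci
      rw [show Nval 0 0 0 = 1 from rfl, mul_one] at hci
      rw [hci]
      show _ = ∑ m ∈ Finset.range (b+1), sval 0 m * Nval 0 (b - m) 0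
      have : ∀ m ∈ Finset.range (b+1), sval 0 m * Nval 0 (b-m) 0
          = if m = 0 then Nval 0 (b - m) 0 else 0 := by
        intro m _
        by_cases hm : m = 0 <;> simp [hm, sval]
      rw [Finset.sum_congr rfl this, Finset.sum_ite_eq' (Finset.range (b+1)) 0]
      simp
    · -- n+1, n ≥ 1
      have expand : Tot (n + 1 + b) b = ∑ w ∈ Finset.range (n+1), Tnum ((n+1) + b) b w := by
        simp [Tot, show n + 1 + b - b = n + 1 by omega]
      rw [expand]
      have : ∀ w ∈ Finset.range (n+1), Tnum ((n+1) + b) b w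
          = ∑ m ∈ Finset.range (b+1), Totx (n + (b - m)) (b - m) * RunEnd n m w := by
        intro w _
        rw [Tnum_closed (n+1) b w (by omega)]
        simp
      rw [Finset.sum_congr rfl this, Finset.sum_comm]
      have inner : ∀ m ∈ Finset.range (b+1),
          ∑ w ∈ Finset.range (n+1), Totx (n + (b - m)) (b - m) * RunEnd n m w
          = sval n (b - m) * Nval n m n := by
        intro m _
        rw [← Finset.mul_sum]
        have hci := runEnd_mul_Nval n m 0
        simp only [Nat.add_zero] at hci
        have : ∑ w ∈ Finset.range (n+1), RunEnd n m w
            = ∑ w ∈ Finset.range (n+1), RunEnd n m w * Nval n 0 w := by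
          refine Finset.sum_congr rfl (fun w _ => ?_)
          rw [show Nval n 0 w = 1 from rfl, mul_one]
        rw [this, hci]
        have hx : Totx (n + (b - m)) (b - m) = sval n (b - m) := by
          rw [Totx, if_neg (by omega), ih (b - m) hn]
        rw [hx]
      rw [Finset.sum_congr rfl inner]
      -- reindex
      show _ = sval (n+1) b
      rw [show sval (n+1) b = ∑ m ∈ Finset.range (b+1), sval n m * Nval n (b - m) n from rfl]
      rw [← Finset.sum_range_reflect (fun m => sval n m * Nval n (b - m) n) (b+1)]
      refine Finset.sum_congr rfl (fun m hm => ?_)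
      simp only [Finset.mem_range] at hm
      congr 2 <;> omega


/-- The generating series of `Nval j · w`. -/
def Gser (j w : ℕ) : PowerSeries ℚ := PowerSeries.mk (fun m => (Nval j m w : ℚ))

lemma coeff_Gser (j w m : ℕ) : PowerSeries.coeff m (Gser j w) = (Nval j m w : ℚ) :=
  PowerSeries.coeff_mk _ _

lemma Gser_zero_eq (j : ℕ) : Gser j 0 = 1 + PowerSeries.X * Gser j j := by
  ext m
  cases m with
  | zero =>
    simp [coeff_Gser, PowerSeries.coeff_zero_X_mul, PowerSeries.coeff_one]
    rfl
  | succ m =>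
    rw [map_add, PowerSeries.coeff_succ_X_mul, PowerSeries.coeff_one, if_neg (Nat.succ_ne_zero m),
      zero_add, coeff_Gser, coeff_Gser]
    rw [show Nval j (m+1) 0 = ∑ w' ∈ allowedF j 0, Nval j m w' from rfl, allowedF_zero,
      Finset.sum_singleton]

lemma Gser_succ_eq {j w : ℕ} (h : w < j) : Gser j (w+1) = (1 + PowerSeries.X) * Gser j w := by
  ext m
  rw [add_mul, one_mul, map_add, coeff_Gser]
  cases m with
  | zero =>
    rw [PowerSeries.coeff_zero_X_mul, add_zero, coeff_Gser]
    rfl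
  | succ m =>
    rw [PowerSeries.coeff_succ_X_mul, coeff_Gser, coeff_Gser]
    rw [show Nval j (m+1) (w+1) = ∑ w' ∈ allowedF j (w+1), Nval j m w' from rfl,
      allowedF_succ h, Finset.sum_insert (by simp [mem_allowedF]; omega),
      show (∑ w' ∈ allowedF j w, Nval j m w') = Nval j (m+1) w from rfl]
    push_cast; ring

lemma Gser_eq_pow_mul {j : ℕ} : ∀ w, w ≤ j → Gser j w = (1 + PowerSeries.X)^w * Gser j 0 := by
  intro w
  induction w with
  | zero => intro _; simp
  | succ w ih =>
    intro h
    rw [Gser_succ_eq (by omega), ih (by omega), pow_succ]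
    ring

lemma Gser_zero_inv (j : ℕ) :
    Gser j 0 * (1 - PowerSeries.X * (1 + PowerSeries.X)^j) = 1 := by
  have h : Gser j 0 = 1 + PowerSeries.X * ((1 + PowerSeries.X)^j * Gser j 0) := by
    conv_lhs => rw [Gser_zero_eq j]
    rw [Gser_eq_pow_mul j le_rfl]
  linear_combination h

lemma Gser_key (j : ℕ) :
    Gser j j * (1 - PowerSeries.X * (1 + PowerSeries.X)^j) = (1 + PowerSeries.X)^j := by
  rw [Gser_eq_pow_mul j le_rfl, mul_assoc, Gser_zero_inv, mul_one]

/-- `F_n`. -/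
def Fser (n : ℕ) : PowerSeries ℚ := ∏ j ∈ Finset.range n, Gser j j

lemma Fser_key (n : ℕ) :
    Fser n * ∏ j ∈ Finset.range n, (1 - PowerSeries.X * (1 + PowerSeries.X)^j)
      = (1 + PowerSeries.X)^(n.choose 2) := by
  rw [Fser, ← Finset.prod_mul_distrib,
    Finset.prod_congr rfl (fun j _ => Gser_key j),
    Finset.prod_pow_eq_pow_sum, Finset.sum_range_id, Nat.choose_two_right]

lemma coeff_Fser (n b : ℕ) : PowerSeries.coeff b (Fser n) = (sval n b : ℚ) := by
  induction n generalizing b with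
  | zero =>
    rw [Fser, Finset.range_zero, Finset.prod_empty, PowerSeries.coeff_one]
    by_cases hb : b = 0 <;> simp [hb, sval]
  | succ n ih =>
    rw [Fser, Finset.prod_range_succ, ← Fser, PowerSeries.coeff_mul,
      Finset.Nat.sum_antidiagonal_eq_sum_range_succ_mk]
    rw [show sval (n+1) b = ∑ m ∈ Finset.range (b+1), sval n m * Nval n (b - m) n from rfl]
    push_cast
    exact Finset.sum_congr rfl (fun m _ => by rw [ih, coeff_Gser])

/-- Helper: equality test for `Fin 2 →₀ ℕ`. -/
lemma finsupp2_eq_iff {d e : Fin 2 →₀ ℕ} : d = e ↔ d 0 = e 0 ∧ d 1 = e 1 := by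
  constructor
  · rintro rfl; exact ⟨rfl, rfl⟩
  · rintro ⟨h0, h1⟩
    ext i
    match i with
    | 0 => exact h0
    | 1 => exact h1

def dg (m : ℕ) : Fin 2 →₀ ℕ := Finsupp.single 0 m + Finsupp.single 1 m

lemma dg_apply0 (m : ℕ) : dg m 0 = m := by
  simp [dg, Finsupp.single_apply]

lemma dg_apply1 (m : ℕ) : dg m 1 = m := by
  simp [dg, Finsupp.single_apply]

lemma eq_dg_iff {d : Fin 2 →₀ ℕ} {m : ℕ} : d = dg m ↔ d 0 = m ∧ d 1 = m := by
  rw [finsupp2_eq_iff, dg_apply0, dg_apply1]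

def diagFun (f : PowerSeries ℚ) : MvPowerSeries (Fin 2) ℚ :=
  fun d => if d 0 = d 1 then PowerSeries.coeff (d 0) f else 0

lemma coeff_diagFun (f : PowerSeries ℚ) (d : Fin 2 →₀ ℕ) :
    MvPowerSeries.coeff d (diagFun f) = if d 0 = d 1 then PowerSeries.coeff (d 0) f else 0 :=
  rfl

lemma diagFun_one : diagFun 1 = 1 := by
  apply MvPowerSeries.ext
  intro d
  rw [coeff_diagFun, MvPowerSeries.coeff_one]
  by_cases h : d 0 = d 1
  · rw [if_pos h, PowerSeries.coeff_one]
    by_cases h0 : d 0 = 0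
    · rw [if_pos h0, if_pos]
      rw [finsupp2_eq_iff]
      simp [h0, ← h]
    · rw [if_neg h0, if_neg]
      rw [finsupp2_eq_iff]
      simp [h0]
  · rw [if_neg h, eq_comm, if_neg]
    rw [finsupp2_eq_iff]
    rintro ⟨h0, h1⟩
    exact h (by simp_all)

lemma diagFun_mul (f g : PowerSeries ℚ) : diagFun (f * g) = diagFun f * diagFun g := by
    apply MvPowerSeries.ext
    intro d
    rw [coeff_diagFun, MvPowerSeries.coeff_mul]
    simp only [coeff_diagFun]
    classical
    by_cases h : d 0 = d 1
    · rw [if_pos h, PowerSeries.coeff_mul]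
      have key : ∀ p ∈ Finset.HasAntidiagonal.antidiagonal d,
          (if p.1 0 = p.1 1 then PowerSeries.coeff (p.1 0) f else 0) *
            (if p.2 0 = p.2 1 then PowerSeries.coeff (p.2 0) g else 0) ≠ 0 →
          (p.1 0 = p.1 1 ∧ p.2 0 = p.2 1) := by
        rintro ⟨u, v⟩ _ hne
        constructor
        · by_contra h1
          rw [if_neg h1, zero_mul] at hne
          exact hne rfl
        · by_contra h2
          rw [if_neg h2, mul_zero] at hne
          exact hne rfl
      rw [← Finset.sum_filter_of_ne key]
      refine (Finset.sum_bij (fun p _ => (p.1 0, p.2 0)) ?_ ?_ ?_ ?_).symm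
      · rintro ⟨u, v⟩ hp
        simp only [Finset.mem_filter, Finset.HasAntidiagonal.mem_antidiagonal] at hp
        simp only [Finset.HasAntidiagonal.mem_antidiagonal]
        have h0 := congrArg (fun z : Fin 2 →₀ ℕ => z 0) hp.1
        simpa [Finsupp.add_apply] using h0
      · rintro ⟨u, v⟩ hp ⟨u', v'⟩ hp' heq
        simp only [Finset.mem_filter, Finset.HasAntidiagonal.mem_antidiagonal] at hp hp'
        simp only [Prod.mk.injEq] at heq
        have hu : u = dg (u 0) := eq_dg_iff.mpr ⟨rfl, hp.2.1.symm⟩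
        have hv : v = dg (v 0) := eq_dg_iff.mpr ⟨rfl, hp.2.2.symm⟩
        have hu' : u' = dg (u' 0) := eq_dg_iff.mpr ⟨rfl, hp'.2.1.symm⟩
        have hv' : v' = dg (v' 0) := eq_dg_iff.mpr ⟨rfl, hp'.2.2.symm⟩
        have h3 : u = u' := by rw [hu, hu', heq.1]
        have h4 : v = v' := by rw [hv, hv', heq.2]
        rw [Prod.ext_iff]
        exact ⟨h3, h4⟩
      · rintro ⟨x, y⟩ hxy
        simp only [Finset.HasAntidiagonal.mem_antidiagonal] at hxy
        refine ⟨(dg x, dg y), ?_, by simp [dg_apply0]⟩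
        simp only [Finset.mem_filter, Finset.HasAntidiagonal.mem_antidiagonal]
        refine ⟨?_, by simp [dg_apply0, dg_apply1], by simp [dg_apply0, dg_apply1]⟩
        rw [finsupp2_eq_iff]
        constructor
        · simpa [Finsupp.add_apply, dg_apply0] using hxy
        · rw [← h]
          simpa [Finsupp.add_apply, dg_apply1] using hxy
      · rintro ⟨u, v⟩ hp
        simp only [Finset.mem_filter, Finset.HasAntidiagonal.mem_antidiagonal] at hp
        rw [if_pos hp.2.1, if_pos hp.2.2]
    · rw [if_neg h]
      refine (Finset.sum_eq_zero ?_).symm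
      rintro ⟨u, v⟩ hp
      simp only [Finset.HasAntidiagonal.mem_antidiagonal] at hp
      by_cases h1 : u 0 = u 1
      · by_cases h2 : v 0 = v 1
        · exfalso
          apply h
          have h0 := congrArg (fun z : Fin 2 →₀ ℕ => z 0) hp
          have h1' := congrArg (fun z : Fin 2 →₀ ℕ => z 1) hp
          simp only [Finsupp.add_apply] at h0 h1'
          omega
        · rw [if_neg h2, mul_zero]
      · rw [if_neg h1, zero_mul]
lemma diagFun_zero : diagFun 0 = 0 := by
  apply MvPowerSeries.ext
  intro d
  rw [coeff_diagFun]
  simp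

lemma diagFun_add (f g : PowerSeries ℚ) : diagFun (f + g) = diagFun f + diagFun g := by
  apply MvPowerSeries.ext
  intro d
  rw [coeff_diagFun, map_add, map_add, coeff_diagFun, coeff_diagFun]
  by_cases h : d 0 = d 1 <;> simp [h]

/-- The diagonal embedding `ℚ[[t]] → ℚ[[x,y]]`, `t ↦ xy`. -/
def diagE : PowerSeries ℚ →+* MvPowerSeries (Fin 2) ℚ where
  toFun := diagFun
  map_one' := diagFun_one
  map_mul' := diagFun_mul
  map_zero' := diagFun_zero
  map_add' := diagFun_add

lemma coeff_diagE (f : PowerSeries ℚ) (d : Fin 2 →₀ ℕ) :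
    MvPowerSeries.coeff d (diagE f) = if d 0 = d 1 then PowerSeries.coeff (d 0) f else 0 :=
  rfl

lemma diagE_X : diagE PowerSeries.X = MvPowerSeries.X 0 * MvPowerSeries.X 1 := by
  apply MvPowerSeries.ext
  intro d
  have hmono : (MvPowerSeries.X 0 * MvPowerSeries.X 1 : MvPowerSeries (Fin 2) ℚ)
      = MvPowerSeries.monomial (dg 1) 1 := by
    rw [MvPowerSeries.X_def, MvPowerSeries.X_def, MvPowerSeries.monomial_mul_monomial, one_mul]
    rfl
  rw [coeff_diagE, hmono, MvPowerSeries.coeff_monomial]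
  by_cases h : d 0 = d 1
  · rw [if_pos h, PowerSeries.coeff_X]
    by_cases h1 : d 0 = 1
    · rw [if_pos h1, if_pos (eq_dg_iff.mpr ⟨h1, by rw [← h]; exact h1⟩)]
    · rw [if_neg h1, if_neg (fun hc => h1 (eq_dg_iff.mp hc).1)]
  · rw [if_neg h, if_neg, eq_comm]
    intro hc
    obtain ⟨h0, h1⟩ := eq_dg_iff.mp hc
    exact h (h0.trans h1.symm)

open MvPowerSeries in
lemma key1 (n : ℕ) :
    ((1 : MvPowerSeries (Fin 2) ℚ) + X 0 * X 1) ^ (n.choose 2) *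
      ∏ k ∈ Finset.range n, ((1 : MvPowerSeries (Fin 2) ℚ) - (1 + X 0 * X 1) ^ k * X 0 * X 1)⁻¹
      = diagE (Fser n) := by
  have hc : ∀ k : ℕ, (MvPowerSeries.constantCoeff : MvPowerSeries (Fin 2) ℚ →+* ℚ)
      ((1 : MvPowerSeries (Fin 2) ℚ) - (1 + X 0 * X 1) ^ k * X 0 * X 1) ≠ 0 := by
    intro k
    rw [map_sub, map_one, map_mul, MvPowerSeries.constantCoeff_X, mul_zero, sub_zero]
    exact one_ne_zero
  have hprod :
      (∏ k ∈ Finset.range n, ((1 : MvPowerSeries (Fin 2) ℚ) - (1 + X 0 * X 1) ^ k * X 0 * X 1)) *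
      (∏ k ∈ Finset.range n, ((1 : MvPowerSeries (Fin 2) ℚ) - (1 + X 0 * X 1) ^ k * X 0 * X 1)⁻¹)
      = 1 := by
    rw [← Finset.prod_mul_distrib,
      Finset.prod_congr rfl (fun k _ => MvPowerSeries.mul_inv_cancel _ (hc k))]
    exact Finset.prod_const_one
  have hE : diagE (Fser n) *
      (∏ k ∈ Finset.range n, ((1 : MvPowerSeries (Fin 2) ℚ) - (1 + X 0 * X 1) ^ k * X 0 * X 1))
      = ((1 : MvPowerSeries (Fin 2) ℚ) + X 0 * X 1) ^ (n.choose 2) := by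
    have h2 := congrArg diagE (Fser_key n)
    rw [map_mul, map_prod, map_pow, map_add, map_one, diagE_X] at h2
    rw [show (∏ k ∈ Finset.range n,
        ((1 : MvPowerSeries (Fin 2) ℚ) - (1 + X 0 * X 1) ^ k * X 0 * X 1))
        = ∏ j ∈ Finset.range n,
          diagE (1 - PowerSeries.X * (1 + PowerSeries.X) ^ j) from ?_]
    · exact h2
    · refine Finset.prod_congr rfl (fun j _ => ?_)
      rw [map_sub, map_one, map_mul, map_pow, map_add, map_one, diagE_X]
      ring
  calc ((1 : MvPowerSeries (Fin 2) ℚ) + X 0 * X 1) ^ (n.choose 2) *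
        ∏ k ∈ Finset.range n, ((1 : MvPowerSeries (Fin 2) ℚ) - (1 + X 0 * X 1) ^ k * X 0 * X 1)⁻¹
      = diagE (Fser n) *
        ((∏ k ∈ Finset.range n, ((1 : MvPowerSeries (Fin 2) ℚ) - (1 + X 0 * X 1) ^ k * X 0 * X 1)) *
         ∏ k ∈ Finset.range n, ((1 : MvPowerSeries (Fin 2) ℚ) - (1 + X 0 * X 1) ^ k * X 0 * X 1)⁻¹) := by
        rw [← mul_assoc, hE]
    _ = diagE (Fser n) := by rw [hprod, mul_one]

lemma gfTerm_eq (n : ℕ) :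
    gfTerm n = (MvPowerSeries.X 0 : MvPowerSeries (Fin 2) ℚ) ^ n * diagE (Fser n) := by
  rw [gfTerm, mul_assoc, key1]

lemma coeff_gfTerm (n a b : ℕ) :
    MvPowerSeries.coeff (Finsupp.single 0 a + Finsupp.single 1 b) (gfTerm n)
      = if a = n + b then (sval n b : ℚ) else 0 := by
  set d := Finsupp.single (0 : Fin 2) a + Finsupp.single 1 b with hd
  have hd0 : d 0 = a := by simp [hd, Finsupp.single_apply]
  have hd1 : d 1 = b := by simp [hd, Finsupp.single_apply]
  rw [gfTerm_eq, MvPowerSeries.X_pow_eq, MvPowerSeries.coeff_monomial_mul]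
  by_cases hna : Finsupp.single (0 : Fin 2) n ≤ d
  · rw [if_pos hna]
    have hle : n ≤ a := by
      have h2 := Finsupp.single_le_iff.mp hna
      rwa [hd0] at h2
    rw [one_mul, coeff_diagE]
    have hsub0 : (d - Finsupp.single (0 : Fin 2) n) 0 = a - n := by
      rw [Finsupp.tsub_apply, hd0]
      simp [Finsupp.single_apply]
    have hsub1 : (d - Finsupp.single (0 : Fin 2) n) 1 = b := by
      rw [Finsupp.tsub_apply, hd1]
      simp [Finsupp.single_apply]
    rw [hsub0, hsub1]
    by_cases he : a - n = b
    · rw [if_pos he, coeff_Fser, he, if_pos (by omega)]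
    · rw [if_neg he, if_neg (by omega)]
  · rw [if_neg hna, if_neg]
    intro hc
    exact hna (by rw [Finsupp.single_le_iff, hd0]; omega)

lemma rhs_coeff (a b : ℕ) (ha : 1 ≤ a) :
    MvPowerSeries.coeff (Finsupp.single 0 a + Finsupp.single 1 b)
        (∑ n ∈ Finset.Icc 1 a, gfTerm n)
      = if b < a then (sval (a - b) b : ℚ) else 0 := by
  rw [map_sum, Finset.sum_congr rfl (fun n _ => coeff_gfTerm n a b)]
  by_cases h : b < a
  · rw [if_pos h, Finset.sum_eq_single (a - b)]
    · rw [if_pos (by omega)]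
    · intro n hn hne
      rw [Finset.mem_Icc] at hn
      rw [if_neg]
      intro hc
      exact hne (by omega)
    · intro habs
      exact absurd (Finset.mem_Icc.mpr ⟨by omega, by omega⟩) habs
  · rw [if_neg h]
    refine Finset.sum_eq_zero (fun n hn => ?_)
    rw [Finset.mem_Icc] at hn
    rw [if_neg (by omega)]


/-! ### Combinatorial part -/

instance (a : ℕ) (P : Finset (ℕ × ℕ)) : Decidable (IsPartitionDiagram a P) := by
  unfold IsPartitionDiagram; infer_instance

instance (P : Finset (ℕ × ℕ)) : Decidable (HasRightCrossing P) := by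
  unfold HasRightCrossing; infer_instance

/-- `CTSet a b` as a `Finset`. -/
def FinCT (a b : ℕ) : Finset (Finset (ℕ × ℕ)) :=
  ((Finset.Icc 1 a ×ˢ Finset.Icc 1 a).powerset).filter
    (fun P => IsPartitionDiagram a P ∧ P.card = b ∧ ¬ HasRightCrossing P)

lemma mem_FinCT {a b : ℕ} {P : Finset (ℕ × ℕ)} :
    P ∈ FinCT a b ↔ IsPartitionDiagram a P ∧ P.card = b ∧ ¬ HasRightCrossing P := by
  rw [FinCT, Finset.mem_filter, Finset.mem_powerset]
  constructor
  · rintro ⟨-, h⟩; exact h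
  · intro h
    refine ⟨fun p hp => ?_, h⟩
    obtain ⟨h1, h2, h3⟩ := h.1.1 p hp
    exact Finset.mem_product.mpr ⟨Finset.mem_Icc.mpr ⟨h1, by omega⟩,
      Finset.mem_Icc.mpr ⟨by omega, h3⟩⟩

lemma CTSet_eq_FinCT (a b : ℕ) : CTSet a b = ↑(FinCT a b) := by
  ext P
  rw [Finset.mem_coe, mem_FinCT]
  rfl

lemma FinCT_empty {a b : ℕ} (ha : 1 ≤ a) (h : a ≤ b) : FinCT a b = ∅ := by
  rw [Finset.eq_empty_iff_forall_notMem]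
  intro P hP
  rw [mem_FinCT] at hP
  obtain ⟨⟨hd1, hd2⟩, hcard, -⟩ := hP
  -- left endpoints are distinct and lie in [1, a-1]
  have hinj : Set.InjOn Prod.fst (P : Set (ℕ × ℕ)) := by
    intro p hp q hq hpq
    by_contra hne
    exact (hd2 p (Finset.mem_coe.mp hp) q (Finset.mem_coe.mp hq) hne).1 hpq
  have himg : (P.image Prod.fst) ⊆ Finset.Icc 1 (a-1) := by
    intro x hx
    rw [Finset.mem_image] at hx
    obtain ⟨p, hp, rfl⟩ := hx
    obtain ⟨h1, h2, h3⟩ := hd1 p hp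
    exact Finset.mem_Icc.mpr ⟨h1, by omega⟩
  have hcard2 : (P.image Prod.fst).card = P.card :=
    Finset.card_image_of_injOn hinj
  have := Finset.card_le_card himg
  rw [hcard2, hcard, Nat.card_Icc] at this
  omega

/-- The set of current "tops": vertices of `[1,a]` that are not left endpoints. -/
def topsF (a : ℕ) (P : Finset (ℕ × ℕ)) : Finset ℕ :=
  (Finset.Icc 1 a).filter (fun q => ∀ p ∈ P, p.1 ≠ q)

/-- The rank of `i`: the number of elements of `T` below `i`. -/
def rankIn (T : Finset ℕ) (i : ℕ) : ℕ := (T.filter (· < i)).card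

/-- The state of the last vertex: rank of the left endpoint of the arc ending at `a`,
or `a - card - 1` if `a` is not a right endpoint. -/
def StateD (a : ℕ) (P : Finset (ℕ × ℕ)) : ℕ :=
  if h : (P.filter (fun p => p.2 = a)).Nonempty then
    rankIn (topsF a P) h.choose.1
  else a - P.card - 1

def StF (a b w : ℕ) : Finset (Finset (ℕ × ℕ)) :=
  (FinCT a b).filter (fun P => StateD a P = w)

/-! rank lemmas -/

lemma rankIn_lt_card {T : Finset ℕ} {i : ℕ} (h : i ∈ T) : rankIn T i < T.card := by
  apply Finset.card_lt_card
  constructor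
  · exact Finset.filter_subset _ _
  · intro hsub
    have := hsub h
    rw [Finset.mem_filter] at this
    omega

lemma rankIn_lt_rankIn {T : Finset ℕ} {i i' : ℕ} (hi : i ∈ T) (h : i < i') :
    rankIn T i < rankIn T i' := by
  apply Finset.card_lt_card
  constructor
  · intro t ht
    rw [Finset.mem_filter] at ht ⊢
    exact ⟨ht.1, by omega⟩
  · intro hsub
    have hmem : i ∈ T.filter (· < i') := Finset.mem_filter.mpr ⟨hi, by omega⟩
    have := hsub hmem
    rw [Finset.mem_filter] at this
    omega

lemma rankIn_mono {T : Finset ℕ} {i i' : ℕ} (h : i ≤ i') : rankIn T i ≤ rankIn T i' := by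
  apply Finset.card_le_card
  intro t ht
  rw [Finset.mem_filter] at ht ⊢
  exact ⟨ht.1, by omega⟩

lemma rankIn_max {T : Finset ℕ} {m : ℕ} (hm : m ∈ T) (hmax : ∀ t ∈ T, t ≤ m) :
    rankIn T m = T.card - 1 := by
  have : T.filter (· < m) = T.erase m := by
    ext t
    rw [Finset.mem_filter, Finset.mem_erase]
    constructor
    · rintro ⟨ht, hlt⟩; exact ⟨by omega, ht⟩
    · rintro ⟨hne, ht⟩; exact ⟨ht, lt_of_le_of_ne (hmax t ht) hne⟩
  rw [rankIn, this, Finset.card_erase_of_mem hm]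

lemma rankIn_injOn {T : Finset ℕ} {i i' : ℕ} (hi : i ∈ T) (hi' : i' ∈ T)
    (h : rankIn T i = rankIn T i') : i = i' := by
  by_contra hne
  rcases Nat.lt_or_ge i i' with hlt | hge
  · have := rankIn_lt_rankIn hi hlt; omega
  · have := rankIn_lt_rankIn hi' (show i' < i by omega); omega

lemma rankIn_surj {T : Finset ℕ} {w : ℕ} (hw : w < T.card) : ∃ i ∈ T, rankIn T i = w := by
  have := Finset.surj_on_of_inj_on_of_card_le (s := T) (t := Finset.range T.card)
    (f := fun i _ => rankIn T i)
    (fun i hi => Finset.mem_range.mpr (rankIn_lt_card hi))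
    (fun i i' hi hi' h => rankIn_injOn hi hi' h)
    (by rw [Finset.card_range])
    w (Finset.mem_range.mpr hw)
  obtain ⟨i, hi, hr⟩ := this
  exact ⟨i, hi, hr.symm⟩


lemma mem_topsF {a : ℕ} {P : Finset (ℕ × ℕ)} {q : ℕ} :
    q ∈ topsF a P ↔ (1 ≤ q ∧ q ≤ a) ∧ ∀ p ∈ P, p.1 ≠ q := by
  rw [topsF, Finset.mem_filter, Finset.mem_Icc]

lemma topsF_le {a : ℕ} {P : Finset (ℕ × ℕ)} : ∀ t ∈ topsF a P, t ≤ a := by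
  intro t ht
  exact (mem_topsF.mp ht).1.2

lemma topsF_card {a b : ℕ} {P : Finset (ℕ × ℕ)} (hP : P ∈ FinCT a b) :
    (topsF a P).card = a - b := by
  rw [mem_FinCT] at hP
  obtain ⟨⟨hd1, hd2⟩, hcard, -⟩ := hP
  have he : topsF a P = (Finset.Icc 1 a) \ (P.image Prod.fst) := by
    ext q
    rw [mem_topsF, Finset.mem_sdiff, Finset.mem_Icc, Finset.mem_image]
    constructor
    · rintro ⟨hb, hall⟩
      refine ⟨hb, ?_⟩
      rintro ⟨p, hp, rfl⟩
      exact hall p hp rfl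
    · rintro ⟨hb, hnot⟩
      exact ⟨hb, fun p hp hq => hnot ⟨p, hp, hq⟩⟩
  have hinj : Set.InjOn Prod.fst (P : Set (ℕ × ℕ)) := by
    intro p hp q hq hpq
    by_contra hne
    exact (hd2 p (Finset.mem_coe.mp hp) q (Finset.mem_coe.mp hq) hne).1 hpq
  have hsub : (P.image Prod.fst) ⊆ Finset.Icc 1 a := by
    intro x hx
    rw [Finset.mem_image] at hx
    obtain ⟨p, hp, rfl⟩ := hx
    obtain ⟨h1, h2, h3⟩ := hd1 p hp
    exact Finset.mem_Icc.mpr ⟨h1, by omega⟩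
  rw [he, Finset.card_sdiff_of_subset hsub, Finset.card_image_of_injOn hinj, hcard, Nat.card_Icc]
  omega

lemma last_mem_topsF {a b : ℕ} {P : Finset (ℕ × ℕ)} (ha : 1 ≤ a) (hP : P ∈ FinCT a b) :
    a ∈ topsF a P := by
  rw [mem_topsF]
  refine ⟨⟨ha, le_rfl⟩, fun p hp => ?_⟩
  obtain ⟨h1, h2, h3⟩ := (mem_FinCT.mp hP).1.1 p hp
  omega

lemma arc_filter_eq {a : ℕ} {P : Finset (ℕ × ℕ)}
    (hd2 : ∀ p ∈ P, ∀ q ∈ P, p ≠ q → p.1 ≠ q.1 ∧ p.2 ≠ q.2)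
    {q : ℕ × ℕ} (hq : q ∈ P) (hv : q.2 = a) : P.filter (fun p => p.2 = a) = {q} := by
  ext p
  rw [Finset.mem_filter, Finset.mem_singleton]
  constructor
  · rintro ⟨hp, hp2⟩
    by_contra hne
    exact (hd2 p hp q hq hne).2 (hp2.trans hv.symm)
  · rintro rfl
    exact ⟨hq, hv⟩

lemma StateD_closer {a b : ℕ} {P : Finset (ℕ × ℕ)} (hP : P ∈ FinCT a b)
    {q : ℕ × ℕ} (hq : q ∈ P) (hq2 : q.2 = a) :
    StateD a P = rankIn (topsF a P) q.1 := by
  have hfe := arc_filter_eq (mem_FinCT.mp hP).1.2 hq hq2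
  have hne : (P.filter (fun p => p.2 = a)).Nonempty := by
    rw [hfe]; exact ⟨q, Finset.mem_singleton_self q⟩
  rw [StateD, dif_pos hne]
  obtain ⟨hcp, hcv⟩ := Finset.mem_filter.mp hne.choose_spec
  have heq : hne.choose = q := by
    by_contra hne2
    exact ((mem_FinCT.mp hP).1.2 hne.choose hcp q hq hne2).2 (hcv.trans hq2.symm)
  rw [heq]

lemma StateD_opener {a b : ℕ} {P : Finset (ℕ × ℕ)} (hP : P ∈ FinCT a b)
    (hno : ∀ p ∈ P, p.2 ≠ a) : StateD a P = a - b - 1 := by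
  rw [StateD, dif_neg, (mem_FinCT.mp hP).2.1]
  rintro ⟨p, hp⟩
  rw [Finset.mem_filter] at hp
  exact hno p hp.1 hp.2

lemma StateD_lt {a b : ℕ} {P : Finset (ℕ × ℕ)} (ha : 1 ≤ a) (hb : b < a)
    (hP : P ∈ FinCT a b) : StateD a P < a - b := by
  have hTcard := topsF_card hP
  have hlast := last_mem_topsF ha hP
  have hrl : rankIn (topsF a P) a = (topsF a P).card - 1 := rankIn_max hlast topsF_le
  by_cases h : ∃ q ∈ P, q.2 = a
  · obtain ⟨q, hq, hq2⟩ := h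
    rw [StateD_closer hP hq hq2]
    have hq1a : q.1 ≤ a := by
      obtain ⟨h1, h2, h3⟩ := (mem_FinCT.mp hP).1.1 q hq
      omega
    have := rankIn_mono (T := topsF a P) hq1a
    omega
  · push_neg at h
    rw [StateD_opener hP h]
    omega

lemma crossing_mono {P Q : Finset (ℕ × ℕ)} (h : P ⊆ Q) :
    HasRightCrossing P → HasRightCrossing Q := by
  rintro ⟨p, hp, q, hq, hc⟩
  exact ⟨p, h hp, q, h hq, hc⟩

lemma crossing_insert {a : ℕ} {P : Finset (ℕ × ℕ)} {i : ℕ}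
    (harcs : ∀ p ∈ P, p.2 ≤ a) :
    HasRightCrossing (insert (i, a+1) P) ↔
      HasRightCrossing P ∨ ∃ i1, (i1, a) ∈ P ∧ i1 < i ∧ i < a := by
  constructor
  · rintro ⟨p, hp, q, hq, h1, h2, h3, h4⟩
    rw [Finset.mem_insert] at hp hq
    rcases hp with rfl | hp
    · rcases hq with rfl | hq
      · simp only at h3
        omega
      · have := harcs q hq
        simp only at h3
        omega
    · rcases hq with rfl | hq
      · right
        simp only at h1 h2 h4
        have hp2 : p.2 = a := by omega
        refine ⟨p.1, ?_, h1, by omega⟩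
        rw [← hp2, Prod.mk.eta]
        exact hp
      · left
        exact ⟨p, hp, q, hq, h1, h2, h3, h4⟩
  · rintro (h | ⟨i1, h1, h2, h3⟩)
    · exact crossing_mono (Finset.subset_insert _ _) h
    · exact ⟨(i1, a), Finset.mem_insert_of_mem h1, (i, a+1), Finset.mem_insert_self _ _,
        h2, h3, by omega, rfl⟩

lemma allowed_iff {a c : ℕ} {P' : Finset (ℕ × ℕ)} (ha : 1 ≤ a) (hP' : P' ∈ FinCT a c)
    {i : ℕ} (hi : i ∈ topsF a P') :
    (∃ i1, (i1, a) ∈ P' ∧ i1 < i ∧ i < a) ↔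
      ¬ (rankIn (topsF a P') i < StateD a P' ∨
          rankIn (topsF a P') i = (topsF a P').card - 1) := by
  have hlast := last_mem_topsF ha hP'
  have hrl : rankIn (topsF a P') a = (topsF a P').card - 1 := rankIn_max hlast topsF_le
  have hranki := rankIn_lt_card hi
  have hia : i ≤ a := topsF_le i hi
  by_cases hcl : ∃ q ∈ P', q.2 = a
  · obtain ⟨q, hq, hq2⟩ := hcl
    rw [StateD_closer hP' hq hq2]
    have hq1T : q.1 ∉ topsF a P' := by
      rw [mem_topsF]
      rintro ⟨-, hall⟩
      exact hall q hq rfl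
    have hne : i ≠ q.1 := fun h => hq1T (h ▸ hi)
    have hq1a : q.1 < a := by
      obtain ⟨h1, h2, h3⟩ := (mem_FinCT.mp hP').1.1 q hq
      omega
    constructor
    · rintro ⟨i1, h1, h2, h3⟩
      have heq : (i1, a) = q := by
        by_contra hne2
        exact ((mem_FinCT.mp hP').1.2 (i1, a) h1 q hq hne2).2 hq2.symm
      have hi1 : i1 = q.1 := by rw [← heq]
      push_neg
      constructor
      · have := rankIn_mono (T := topsF a P') (show q.1 ≤ i by omega)
        omega
      · have := rankIn_lt_rankIn hi h3
        omega
    · intro hnot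
      push_neg at hnot
      obtain ⟨hn1, hn2⟩ := hnot
      have hilta : i < a := by
        rcases Nat.lt_or_ge i a with h | h
        · exact h
        · exfalso
          have : i = a := by omega
          rw [this] at hn2
          exact hn2 hrl
      refine ⟨q.1, by rw [← hq2, Prod.mk.eta]; exact hq, ?_, hilta⟩
      rcases Nat.lt_or_ge q.1 i with h | h
      · exact h
      · exfalso
        have hlt : i < q.1 := by omega
        have := rankIn_lt_rankIn hi hlt
        have := rankIn_mono (T := topsF a P') (show q.1 ≤ q.1 from le_rfl)
        omega
  · push_neg at hcl
    rw [StateD_opener hP' hcl]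
    have hcardT := topsF_card hP'
    constructor
    · rintro ⟨i1, h1, -, -⟩
      exact absurd rfl (hcl (i1, a) h1)
    · intro hnot
      exfalso
      apply hnot
      rw [hcardT]
      omega

lemma rankIn_insert {a : ℕ} {P' : Finset (ℕ × ℕ)} {i : ℕ} (hia : i ≤ a) :
    rankIn (topsF (a+1) (insert (i, a+1) P')) i = rankIn (topsF a P') i := by
  rw [rankIn, rankIn]
  congr 1
  ext t
  simp only [Finset.mem_filter, mem_topsF, Finset.mem_insert]
  constructor
  · rintro ⟨⟨⟨hb1, hb2⟩, hall⟩, hlt⟩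
    refine ⟨⟨⟨hb1, by omega⟩, fun p hp => hall p (Or.inr hp)⟩, hlt⟩
  · rintro ⟨⟨⟨hb1, hb2⟩, hall⟩, hlt⟩
    refine ⟨⟨⟨hb1, by omega⟩, fun p hp => ?_⟩, hlt⟩
    rcases hp with rfl | hp
    · simp only
      omega
    · exact hall p hp


lemma erase_mem_FinCT {a b : ℕ} {P : Finset (ℕ × ℕ)} (hP : P ∈ FinCT (a+1) b)
    {q : ℕ × ℕ} (hq : q ∈ P) (hq2 : q.2 = a+1) :
    P.erase q ∈ FinCT a (b-1) ∧ 1 ≤ b ∧ q.1 ∈ topsF a (P.erase q) ∧ P = insert q (P.erase q) := by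
  obtain ⟨⟨hd1, hd2⟩, hcard, hcr⟩ := mem_FinCT.mp hP
  have hq1 := hd1 q hq
  refine ⟨?_, ?_, ?_, (Finset.insert_erase hq).symm⟩
  · rw [mem_FinCT]
    refine ⟨⟨?_, ?_⟩, ?_, ?_⟩
    · intro p hp
      obtain ⟨hpne, hp'⟩ := Finset.mem_erase.mp hp
      have hb := hd1 p hp'
      have hne2 : p.2 ≠ a+1 := by
        intro h
        exact (hd2 p hp' q hq hpne).2 (h.trans hq2.symm)
      exact ⟨hb.1, hb.2.1, by omega⟩
    · intro p hp p' hp' hne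
      exact hd2 p (Finset.mem_of_mem_erase hp) p' (Finset.mem_of_mem_erase hp') hne
    · rw [Finset.card_erase_of_mem hq, hcard]
    · intro h
      exact hcr (crossing_mono (Finset.erase_subset _ _) h)
  · have : 1 ≤ P.card := Finset.card_pos.mpr ⟨q, hq⟩
    omega
  · rw [mem_topsF]
    refine ⟨⟨hq1.1, by omega⟩, fun p hp => ?_⟩
    obtain ⟨hpne, hp'⟩ := Finset.mem_erase.mp hp
    exact (hd2 p hp' q hq hpne).1

lemma insert_mem_FinCT {a b : ℕ} {P' : Finset (ℕ × ℕ)} (hP' : P' ∈ FinCT a (b-1))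
    (hb : 1 ≤ b) {i : ℕ} (hi : i ∈ topsF a P')
    (hcr : ¬ ∃ i1, (i1, a) ∈ P' ∧ i1 < i ∧ i < a) :
    insert (i, a+1) P' ∈ FinCT (a+1) b := by
  obtain ⟨⟨hd1, hd2⟩, hcard, hcrP⟩ := mem_FinCT.mp hP'
  obtain ⟨⟨hi1, hi2⟩, hitop⟩ := mem_topsF.mp hi
  have hnotmem : (i, a+1) ∉ P' := by
    intro h
    have := hd1 _ h
    simp only at this
    omega
  rw [mem_FinCT]
  refine ⟨⟨?_, ?_⟩, ?_, ?_⟩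
  · intro p hp
    rcases Finset.mem_insert.mp hp with rfl | hp
    · exact ⟨hi1, by omega, le_rfl⟩
    · have := hd1 p hp
      exact ⟨this.1, this.2.1, by omega⟩
  · intro p hp p' hp' hne
    rcases Finset.mem_insert.mp hp with rfl | hp <;>
      rcases Finset.mem_insert.mp hp' with rfl | hp'
    · exact absurd rfl hne
    · have hb2 := (hd1 p' hp').2.2
      exact ⟨fun h => hitop p' hp' h.symm, by simp only; omega⟩
    · have hb2 := (hd1 p hp).2.2
      exact ⟨fun h => hitop p hp h, by simp only; omega⟩
    · exact hd2 p hp p' hp' hne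
  · rw [Finset.card_insert_of_notMem hnotmem, hcard]
    omega
  · rw [crossing_insert (fun p hp => (hd1 p hp).2.2)]
    rintro (h | h)
    · exact hcrP h
    · exact hcr h

lemma FinCT_one : FinCT 1 0 = {∅} := by
  ext P
  rw [mem_FinCT, Finset.mem_singleton]
  constructor
  · rintro ⟨-, hcard, -⟩
    exact Finset.card_eq_zero.mp hcard
  · rintro rfl
    refine ⟨⟨fun p hp => absurd hp (Finset.notMem_empty p),
      fun p hp => absurd hp (Finset.notMem_empty p)⟩, rfl, ?_⟩
    rintro ⟨p, hp, -⟩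
    exact absurd hp (Finset.notMem_empty p)

lemma StateD_empty : StateD 1 (∅ : Finset (ℕ × ℕ)) = 0 := by
  rw [StateD, dif_neg]
  · rfl
  · rintro ⟨p, hp⟩
    simp at hp

lemma StF_card : ∀ a, 1 ≤ a → ∀ b w, (StF a b w).card = Tnum a b w := by
  intro a
  induction a using Nat.strong_induction_on with
  | _ a ih =>
    match a with
    | 0 => intro h; omega
    | 1 =>
      intro _ b w
      rcases Nat.eq_zero_or_pos b with rfl | hb
      · rw [StF, FinCT_one]
        rw [show Tnum 1 0 w = if 0 = 0 ∧ w = 0 then 1 else 0 from rfl]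
        by_cases hw : w = 0
        · subst hw
          rw [Finset.filter_singleton, if_pos StateD_empty]
          simp
        · rw [Finset.filter_singleton, if_neg (by rw [StateD_empty]; omega)]
          simp [hw]
      · rw [StF, FinCT_empty le_rfl hb, Finset.filter_empty, Finset.card_empty]
        rw [show Tnum 1 b w = if b = 0 ∧ w = 0 then 1 else 0 from rfl, if_neg (by omega)]
    | (M+2) =>
      intro _ b w
      by_cases hbN : M + 2 ≤ b
      · rw [StF, FinCT_empty (by omega) hbN, Finset.filter_empty, Finset.card_empty,
          Tnum_eq_zero _ _ _ hbN]
      · push_neg at hbN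
        -- b ≤ M + 1
        classical
        -- total count at level M+1
        have hTotPrev : ∀ c, (FinCT (M+1) c).card
            = ∑ w' ∈ Finset.range (M + 1 - c), Tnum (M+1) c w' := by
          intro c
          rcases Nat.lt_or_ge c (M+1) with hc | hc
          · rw [Finset.card_eq_sum_card_fiberwise
              (f := fun P => StateD (M+1) P) (t := Finset.range (M+1-c))
              (fun P hP => Finset.mem_range.mpr (StateD_lt (by omega) hc hP))]
            exact Finset.sum_congr rfl (fun w' _ => ih (M+1) (by omega) (by omega) c w')
          · rw [FinCT_empty (by omega) hc, Finset.card_empty,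
              show M + 1 - c = 0 by omega, Finset.range_zero, Finset.sum_empty]
        have hsplit := Finset.card_filter_add_card_filter_not
          (s := StF (M+2) b w) (p := fun P => ∃ p ∈ P, p.2 = M + 2)
        -- opener part
        have hOp : (StF (M+2) b w).filter (fun P => ¬ ∃ p ∈ P, p.2 = M + 2)
            = if w = M + 1 - b then FinCT (M+1) b else ∅ := by
          ext P
          rw [Finset.mem_filter, StF, Finset.mem_filter]
          constructor
          · rintro ⟨⟨hPN, hst⟩, hnc⟩
            push_neg at hnc
            have hP' : P ∈ FinCT (M+1) b := by
              rw [mem_FinCT] at hPN ⊢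
              refine ⟨⟨fun p hp => ?_, hPN.1.2⟩, hPN.2⟩
              obtain ⟨h1, h2, h3⟩ := hPN.1.1 p hp
              have := hnc p hp
              exact ⟨h1, h2, by omega⟩
            have hw : w = M + 1 - b := by
              rw [← hst, StateD_opener hPN (fun p hp => hnc p hp)]
              omega
            rw [if_pos hw]
            exact hP'
          · intro hP
            by_cases hw : w = M + 1 - b
            · rw [if_pos hw] at hP
              have hPN : P ∈ FinCT (M+2) b := by
                rw [mem_FinCT] at hP ⊢
                refine ⟨⟨fun p hp => ?_, hP.1.2⟩, hP.2⟩
                obtain ⟨h1, h2, h3⟩ := hP.1.1 p hp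
                exact ⟨h1, h2, by omega⟩
              have hnc : ∀ p ∈ P, p.2 ≠ M + 2 := by
                intro p hp
                have := (mem_FinCT.mp hP).1.1 p hp
                omega
              refine ⟨⟨hPN, ?_⟩, fun hex => ?_⟩
              · rw [StateD_opener hPN hnc]
                omega
              · obtain ⟨p, hp, hp2⟩ := hex
                exact hnc p hp hp2
            · rw [if_neg hw] at hP
              exact absurd hP (Finset.notMem_empty P)
        -- closer part
        have hCl : ((StF (M+2) b w).filter (fun P => ∃ p ∈ P, p.2 = M + 2)).card
            = if b = 0 then 0 else
              ∑ w' ∈ revAllowedF (M + 1 - b) w, Tnum (M+1) (b-1) w' := by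
          rcases Nat.eq_zero_or_pos b with rfl | hb
          · rw [if_pos rfl, Finset.card_eq_zero, Finset.eq_empty_iff_forall_notMem]
            intro P hP
            rw [Finset.mem_filter, StF, Finset.mem_filter] at hP
            obtain ⟨⟨hPN, -⟩, p, hp, -⟩ := hP
            have := (mem_FinCT.mp hPN).2.1
            rw [Finset.card_eq_zero.mp this] at hp
            exact absurd hp (Finset.notMem_empty p)
          · rw [if_neg (by omega)]
            have hdisj : ∀ w₁ ∈ revAllowedF (M + 1 - b) w, ∀ w₂ ∈ revAllowedF (M + 1 - b) w,
                w₁ ≠ w₂ → Disjoint (StF (M+1) (b-1) w₁) (StF (M+1) (b-1) w₂) := by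
              intro w₁ _ w₂ _ hne
              rw [Finset.disjoint_left]
              intro P hP1 hP2
              rw [StF, Finset.mem_filter] at hP1 hP2
              exact hne (hP1.2.symm.trans hP2.2)
            rw [show (∑ w' ∈ revAllowedF (M + 1 - b) w, Tnum (M+1) (b-1) w')
                = ∑ w' ∈ revAllowedF (M + 1 - b) w, (StF (M+1) (b-1) w').card from
                (Finset.sum_congr rfl (fun w' _ => (ih (M+1) (by omega) (by omega) (b-1) w'))).symm,
              ← Finset.card_biUnion hdisj]
            -- the bijection erasing the last arc
            refine Finset.card_bij (fun P hP => P.erase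
              ((Finset.mem_filter.mp hP).2.choose)) ?_ ?_ ?_
            · -- maps into
              rintro P hP
              obtain ⟨hPS, hex⟩ := Finset.mem_filter.mp hP
              obtain ⟨hPN, hst⟩ := Finset.mem_filter.mp hPS
              obtain ⟨hqm, hq2⟩ := hex.choose_spec
              set q := hex.choose with hqdef
              obtain ⟨hP'm, hb1, hitop, hins⟩ := erase_mem_FinCT hPN hqm hq2
              set P' := P.erase q with hP'def
              have hq1le : q.1 ≤ M + 1 := by
                have := (mem_FinCT.mp hPN).1.1 q hqm
                omega
              have hinsq : P = insert (q.1, (M+1)+1) P' := by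
                rw [hins]
                congr 1
                rw [← hq2, Prod.mk.eta]
              have hrank : StateD (M+2) P = rankIn (topsF (M+1) P') q.1 := by
                rw [StateD_closer hPN hqm hq2, hinsq, rankIn_insert hq1le]
              have hw_eq : rankIn (topsF (M+1) P') q.1 = w := by
                rw [← hrank, hst]
              have hnocross : ¬ ∃ i1, (i1, M+1) ∈ P' ∧ i1 < q.1 ∧ q.1 < M+1 := by
                intro hex2
                apply (mem_FinCT.mp hPN).2.2
                rw [hinsq, crossing_insert (fun p hp => ((mem_FinCT.mp hP'm).1.1 p hp).2.2)]
                exact Or.inr hex2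
              have hcond := (allowed_iff (by omega) hP'm hitop).not.mp hnocross
              rw [not_not] at hcond
              have hcardT : (topsF (M+1) P').card = M + 2 - b := by
                rw [topsF_card hP'm]
                omega
              rw [Finset.mem_biUnion]
              refine ⟨StateD (M+1) P', ?_, ?_⟩
              · rw [mem_revAllowedF]
                have hstlt : StateD (M+1) P' < M + 2 - b := by
                  have := StateD_lt (a := M+1) (b := b-1) (by omega) (by omega) hP'm
                  omega
                rcases hcond with hlt | heq
                · rw [hw_eq] at hlt
                  exact ⟨by omega, Or.inl hlt⟩
                · rw [hw_eq] at heq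
                  rw [hcardT] at heq
                  exact ⟨by omega, Or.inr (by omega)⟩
              · rw [StF, Finset.mem_filter]
                exact ⟨hP'm, rfl⟩
            · -- injectivity
              rintro P₁ hP₁ P₂ hP₂ heq0
              obtain ⟨hPS₁, hex₁⟩ := Finset.mem_filter.mp hP₁
              obtain ⟨hPN₁, hst₁⟩ := Finset.mem_filter.mp hPS₁
              obtain ⟨hqm₁, hq2₁⟩ := hex₁.choose_spec
              obtain ⟨hPS₂, hex₂⟩ := Finset.mem_filter.mp hP₂
              obtain ⟨hPN₂, hst₂⟩ := Finset.mem_filter.mp hPS₂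
              obtain ⟨hqm₂, hq2₂⟩ := hex₂.choose_spec
              have heq : P₁.erase ((Finset.mem_filter.mp hP₁).2.choose)
                  = P₂.erase ((Finset.mem_filter.mp hP₂).2.choose) := heq0
              have hch₁ : (Finset.mem_filter.mp hP₁).2.choose = hex₁.choose := rfl
              have hch₂ : (Finset.mem_filter.mp hP₂).2.choose = hex₂.choose := rfl
              rw [hch₁, hch₂] at heq
              set q₁ := hex₁.choose with hq₁def
              set q₂ := hex₂.choose with hq₂def
              obtain ⟨hP'm₁, -, hitop₁, hins₁⟩ := erase_mem_FinCT hPN₁ hqm₁ hq2₁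
              obtain ⟨hP'm₂, -, hitop₂, hins₂⟩ := erase_mem_FinCT hPN₂ hqm₂ hq2₂
              set P'₁ := P₁.erase q₁ with hP'₁def
              set P'₂ := P₂.erase q₂ with hP'₂def
              have hq1le₁ : q₁.1 ≤ M + 1 := by
                have := (mem_FinCT.mp hPN₁).1.1 _ hqm₁; omega
              have hq1le₂ : q₂.1 ≤ M + 1 := by
                have := (mem_FinCT.mp hPN₂).1.1 _ hqm₂; omega
              have hinsq₁ : P₁ = insert (q₁.1, (M+1)+1) P'₁ := by
                rw [hins₁]
                congr 1
                rw [← hq2₁, Prod.mk.eta]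
              have hinsq₂ : P₂ = insert (q₂.1, (M+1)+1) P'₂ := by
                rw [hins₂]
                congr 1
                rw [← hq2₂, Prod.mk.eta]
              have hrank₁ : rankIn (topsF (M+1) P'₁) q₁.1 = w := by
                rw [← hst₁, StateD_closer hPN₁ hqm₁ hq2₁, hinsq₁, rankIn_insert hq1le₁]
              have hrank₂ : rankIn (topsF (M+1) P'₂) q₂.1 = w := by
                rw [← hst₂, StateD_closer hPN₂ hqm₂ hq2₂, hinsq₂, rankIn_insert hq1le₂]
              rw [heq] at hrank₁ hitop₁
              have hi_eq : q₁.1 = q₂.1 :=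
                rankIn_injOn hitop₁ hitop₂ (hrank₁.trans hrank₂.symm)
              have hq_eq : q₁ = q₂ := by
                rw [← Prod.mk.eta (p := q₁), ← Prod.mk.eta (p := q₂), hi_eq, hq2₁, hq2₂]
              rw [hins₁, hins₂, hq_eq, heq]
            · -- surjectivity
              rintro P' hP'
              rw [Finset.mem_biUnion] at hP'
              obtain ⟨w', hw', hP'm⟩ := hP'
              rw [StF, Finset.mem_filter] at hP'm
              obtain ⟨hP'CT, hst'⟩ := hP'm
              rw [mem_revAllowedF] at hw'
              have hcardT : (topsF (M+1) P').card = M + 2 - b := by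
                rw [topsF_card hP'CT]; omega
              obtain ⟨i, hiT, hirank⟩ := rankIn_surj (T := topsF (M+1) P') (w := w)
                (by omega)
              have hcond : rankIn (topsF (M+1) P') i < StateD (M+1) P'
                  ∨ rankIn (topsF (M+1) P') i = (topsF (M+1) P').card - 1 := by
                rw [hirank, hst', hcardT]
                rcases hw'.2 with h | h
                · exact Or.inl h
                · exact Or.inr (by omega)
              have hnocross : ¬ ∃ i1, (i1, M+1) ∈ P' ∧ i1 < i ∧ i < M+1 := by
                rw [allowed_iff (by omega) hP'CT hiT]
                rw [not_not]
                exact hcond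
              have hPmem : insert (i, (M+1)+1) P' ∈ FinCT ((M+1)+1) b :=
                insert_mem_FinCT hP'CT (by omega) hiT hnocross
              set P := insert (i, (M+1)+1) P' with hPdef
              have hqm : (i, M+2) ∈ P := Finset.mem_insert_self _ _
              have hnot : (i, M+2) ∉ P' := by
                intro h
                have := (mem_FinCT.mp hP'CT).1.1 _ h
                simp only at this
                omega
              have hPS : P ∈ StF (M+2) b w := by
                rw [StF, Finset.mem_filter]
                refine ⟨hPmem, ?_⟩
                rw [StateD_closer hPmem hqm rfl]
                show rankIn (topsF (M+2) P) i = w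
                rw [show (M+2) = (M+1)+1 from rfl, hPdef,
                  rankIn_insert (topsF_le i hiT), hirank]
              have hex : ∃ p ∈ P, p.2 = M + 2 := ⟨(i, M+2), hqm, rfl⟩
              have hgen : ∀ (hx : ∃ p ∈ P, p.2 = M + 2), hx.choose = (i, M+2) := by
                intro hx
                obtain ⟨hcm, hc2⟩ := hx.choose_spec
                by_contra hne
                exact ((mem_FinCT.mp hPmem).1.2 _ hcm _ hqm hne).2 hc2
              refine ⟨P, Finset.mem_filter.mpr ⟨hPS, hex⟩, ?_⟩
              show P.erase _ = P'
              rw [hgen, hPdef, Finset.erase_insert hnot]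
        -- assemble
        rw [← hsplit, hOp, hCl]
        rw [show Tnum (M+2) b w =
          (if w = M + 1 - b then ∑ w' ∈ Finset.range (M + 1 - b), Tnum (M+1) b w' else 0) +
          (if b = 0 then 0 else ∑ w' ∈ revAllowedF (M + 1 - b) w, Tnum (M+1) (b-1) w') from rfl]
        rw [add_comm]
        congr 1
        by_cases hw : w = M + 1 - b
        · rw [if_pos hw, if_pos hw, hTotPrev b]
        · rw [if_neg hw, if_neg hw, Finset.card_empty]

end

/-- `Σ_{n≥1} Σ_k CT(n,k) x^n y^k = Σ_{n≥1} x^n (1+xy)^{C(n,2)} / ∏_{k=0}^{n-1}(1-(1+xy)^k xy)`,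
stated coefficient-wise: the coefficient of `x^a y^b` on the left is `CT(a,b)`, and on the
right only the terms with `n ≤ a` contribute (each `gfTerm n` is divisible by `x^n`). -/
theorem stmt12 (a b : ℕ) (ha : 1 ≤ a) :
    ((CTSet a b).ncard : ℚ) =
      MvPowerSeries.coeff (Finsupp.single 0 a + Finsupp.single 1 b)
        (∑ n ∈ Finset.Icc 1 a, gfTerm n) := by
  rw [CTSet_eq_FinCT, Set.ncard_coe_finset, rhs_coeff a b ha]
  by_cases h : b < a
  · rw [if_pos h]
    have hcount : (FinCT a b).card = sval (a - b) b := by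
      rw [Finset.card_eq_sum_card_fiberwise (f := fun P => StateD a P)
        (t := Finset.range (a - b))
        (fun P hP => Finset.mem_range.mpr (StateD_lt ha h hP))]
      have h2 : ∑ w ∈ Finset.range (a - b),
          ((FinCT a b).filter (fun P => StateD a P = w)).card
          = ∑ w ∈ Finset.range (a - b), Tnum a b w :=
        Finset.sum_congr rfl (fun w _ => StF_card a ha b w)
      rw [h2]
      have h3 := Tot_eq_sval (a - b) b (by omega)
      rw [show a - b + b = a by omega] at h3
      exact h3
    rw [hcount]
  · rw [if_neg h, FinCT_empty ha (by omega), Finset.card_empty, Nat.cast_zero]
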